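/- Let 𝛂 be a generalized composition of n. There is exactly one standard ribbon tableau T of shape 𝛂 (the sink tableau T^←_𝛂) such that for every i ∈ {1,...,n-1}, π_i·T ∈ {0, T}; it is obtained by filling rd(𝛂) with 1,2,...,n from left to right in each row, rows taken top to bottom. -/

import Mathlib

/-- The cells of the ribbon diagram of a composition `α`, as pairs
`(column, height)` (0-based columns from the left, heights increasing upward):
column `j` occupies the heights `[(α₁+⋯+α_j) - j, (α₁+⋯+α_{j+1}) - j - 1]`,
so that consecutive columns overlap in exactly one row, each column sitting
above-right of the previous one. -/
def ribbonCells (α : List ℕ) : Set (ℕ × ℕ) :=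
  {jh | jh.1 < α.length ∧ (α.take jh.1).sum - jh.1 ≤ jh.2 ∧
        jh.2 < (α.take jh.1).sum - jh.1 + α.getD jh.1 0}

/-- Column offset of the `m`-th component of a generalized ribbon diagram. -/
def colOff (L : List (List ℕ)) (m : ℕ) : ℕ := ((L.take m).map List.length).sum

/-- Height offset of the `m`-th component of a generalized ribbon diagram
(each component is placed strictly to the northeast of the previous one,
one row above its top). -/
def htOff (L : List (List ℕ)) (m : ℕ) : ℕ :=
  ((L.take m).map fun l => l.sum - l.length + 1).sum

/-- The cells of the generalized ribbon diagram of `𝛂 = α⁽¹⁾ ⊕ ⋯ ⊕ α⁽ᵏ⁾`. -/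
def gribbonCells (L : List (List ℕ)) : Set (ℕ × ℕ) :=
  {jh | ∃ m < L.length, ∃ c ∈ ribbonCells (L.getD m []),
    jh = (colOff L m + c.1, htOff L m + c.2)}

/-- The size `n` of the generalized composition `𝛂`. -/
def srtSize (L : List (List ℕ)) : ℕ := (L.map List.sum).sum

/-- A standard ribbon tableau of shape `𝛂`, encoded by the position
`p e = (column, height)` of each entry `e ∈ {1,…,n}` (heights increase upward):
entries fill the diagram bijectively, increase from left to right in each row
(cells of equal height), and increase from top to bottom in each column
(i.e. decrease with height).  (Entries outside `{1,…,n}` are normalized.) -/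
def IsSRT (L : List (List ℕ)) (p : ℕ → ℕ × ℕ) : Prop :=
  Set.BijOn p (Set.Icc 1 (srtSize L)) (gribbonCells L) ∧
  (∀ a ∈ Set.Icc 1 (srtSize L), ∀ b ∈ Set.Icc 1 (srtSize L),
    (p a).2 = (p b).2 → (p a).1 < (p b).1 → a < b) ∧
  (∀ a ∈ Set.Icc 1 (srtSize L), ∀ b ∈ Set.Icc 1 (srtSize L),
    (p a).1 = (p b).1 → (p b).2 < (p a).2 → a < b) ∧
  (∀ e : ℕ, e ∉ Set.Icc 1 (srtSize L) → p e = (0, 0))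

/-- `T` satisfies `π_i · T ∈ {0, T}` for all `i ∈ {1,…,n-1}`: for no `i` is `i`
strictly below `i+1` (which is the only case where `π_i · T` is a different
tableau `s_i · T`). -/
def IsSinkSRT (L : List (List ℕ)) (T : {p : ℕ → ℕ × ℕ // IsSRT L p}) : Prop :=
  ∀ i : ℕ, 1 ≤ i → i + 1 ≤ srtSize L → ¬ (T.1 i).2 < (T.1 (i + 1)).2

/-- `T` is the row-reading filling: the diagram is filled with `1, 2, …, n` from
left to right in each row, rows taken from top to bottom (larger height first;
within a row, smaller column first). -/
def IsRowReadingSRT (L : List (List ℕ)) (T : {p : ℕ → ℕ × ℕ // IsSRT L p}) : Prop :=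
  ∀ a ∈ Set.Icc 1 (srtSize L), ∀ b ∈ Set.Icc 1 (srtSize L),
    ((T.1 b).2 < (T.1 a).2 ∨ ((T.1 a).2 = (T.1 b).2 ∧ (T.1 a).1 < (T.1 b).1)) →
    a < b

-- the reading relation
def rr : ℕ × ℕ → ℕ × ℕ → Prop := fun a b => b.2 < a.2 ∨ (a.2 = b.2 ∧ a.1 ≤ b.1)

def rlt : ℕ × ℕ → ℕ × ℕ → Prop := fun a b => b.2 < a.2 ∨ (a.2 = b.2 ∧ a.1 < b.1)

instance : DecidableRel rr := fun a b => by unfold rr; infer_instance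

instance : IsTrans (ℕ × ℕ) rr := ⟨fun a b c h1 h2 => by unfold rr at *; omega⟩
instance : IsAntisymm (ℕ × ℕ) rr :=
  ⟨fun a b h1 h2 => by unfold rr at *; exact Prod.ext (by omega) (by omega)⟩
instance : IsTotal (ℕ × ℕ) rr := ⟨fun a b => by unfold rr; omega⟩

lemma rlt_iff {a b : ℕ × ℕ} : rlt a b ↔ rr a b ∧ a ≠ b := by
  unfold rr rlt
  rw [ne_eq, Prod.ext_iff]
  omega

lemma rlt_trichotomy (a b : ℕ × ℕ) : rlt a b ∨ a = b ∨ rlt b a := by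
  unfold rlt; rw [Prod.ext_iff]; omega

lemma rlt_asymm {a b : ℕ × ℕ} (h : rlt a b) : ¬ rlt b a := by unfold rlt at *; omega

-- finset versions
def ribbonFinset (α : List ℕ) : Finset (ℕ × ℕ) :=
  (Finset.range α.length).biUnion fun j =>
    (Finset.Ico ((α.take j).sum - j) ((α.take j).sum - j + α.getD j 0)).image fun h => (j, h)

lemma mem_ribbonFinset {α : List ℕ} {c : ℕ × ℕ} :
    c ∈ ribbonFinset α ↔ c ∈ ribbonCells α := by
  obtain ⟨j, h⟩ := c
  simp [ribbonFinset, ribbonCells, Finset.mem_biUnion, Finset.mem_image, Finset.mem_Ico]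

lemma sum_getD (l : List ℕ) : ∑ j ∈ Finset.range l.length, l.getD j 0 = l.sum := by
  induction l with
  | nil => simp
  | cons a t ih =>
    rw [List.length_cons, Finset.sum_range_succ']
    simp only [List.getD_cons_succ, List.getD_cons_zero, List.sum_cons]
    rw [ih]; exact Nat.add_comm _ _

lemma sum_getD' (L : List (List ℕ)) :
    ∑ m ∈ Finset.range L.length, (L.getD m []).sum = srtSize L := by
  induction L with
  | nil => simp [srtSize]
  | cons a t ih =>
    rw [List.length_cons, Finset.sum_range_succ']
    simp only [List.getD_cons_succ, List.getD_cons_zero, srtSize, List.map_cons, List.sum_cons]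
    rw [show (∑ m ∈ Finset.range t.length, (t.getD m []).sum) = srtSize t from ih]
    exact Nat.add_comm _ _

lemma card_ribbonFinset (α : List ℕ) : (ribbonFinset α).card = α.sum := by
  rw [ribbonFinset, Finset.card_biUnion]
  · rw [← sum_getD α]
    refine Finset.sum_congr rfl fun j _ => ?_
    rw [Finset.card_image_of_injective _ (fun a b h => by simpa using h), Nat.card_Ico]
    omega
  · intro x _ y _ hxy
    simp only [Finset.disjoint_left, Finset.mem_image]
    rintro c ⟨h1, _, rfl⟩ ⟨h2, _, h⟩
    exact hxy (by simpa using (Prod.ext_iff.mp h.symm).1)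

def gribbonFinset (L : List (List ℕ)) : Finset (ℕ × ℕ) :=
  (Finset.range L.length).biUnion fun m =>
    (ribbonFinset (L.getD m [])).image fun c => (colOff L m + c.1, htOff L m + c.2)

lemma mem_gribbonFinset {L : List (List ℕ)} {c : ℕ × ℕ} :
    c ∈ gribbonFinset L ↔ c ∈ gribbonCells L := by
  simp only [gribbonFinset, Finset.mem_biUnion, Finset.mem_image, Finset.mem_range,
    gribbonCells, Set.mem_setOf_eq]
  constructor
  · rintro ⟨m, hm, cc, hcc, rfl⟩
    exact ⟨m, hm, cc, mem_ribbonFinset.mp hcc, rfl⟩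
  · rintro ⟨m, hm, cc, hcc, rfl⟩
    exact ⟨m, hm, cc, mem_ribbonFinset.mpr hcc, rfl⟩

lemma colOff_succ {L : List (List ℕ)} {m : ℕ} (hm : m < L.length) :
    colOff L (m + 1) = colOff L m + (L.getD m []).length := by
  unfold colOff
  rw [List.take_succ, List.map_append, List.sum_append]
  congr 1
  simp [List.getElem?_eq_getElem hm, List.getD_eq_getElem?_getD]

lemma colOff_mono (L : List (List ℕ)) : Monotone (colOff L) := by
  intro a b hab
  unfold colOff
  calc ((L.take a).map List.length).sum = (((L.take b).take a).map List.length).sum := by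
        rw [List.take_take, min_eq_left hab]
    _ ≤ ((L.take b).map List.length).sum := by
        conv_rhs => rw [← List.take_append_drop a (L.take b)]
        rw [List.map_append, List.sum_append]; omega

lemma col_lt_of_mem {L : List (List ℕ)} {m : ℕ} {c : ℕ × ℕ} (hm : m < L.length)
    (hc : c ∈ ribbonCells (L.getD m [])) :
    colOff L m + c.1 < colOff L (m + 1) := by
  rw [colOff_succ hm]
  exact Nat.add_lt_add_left hc.1 _

lemma card_gribbonFinset (L : List (List ℕ)) : (gribbonFinset L).card = srtSize L := by
  rw [gribbonFinset, Finset.card_biUnion]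
  · rw [← sum_getD' L]
    refine Finset.sum_congr rfl fun m _ => ?_
    rw [Finset.card_image_of_injective, card_ribbonFinset]
    intro a b h
    simp only [Prod.mk.injEq] at h
    exact Prod.ext (by omega) (by omega)
  · intro x hx y hy hxy
    simp only [Finset.mem_coe, Finset.coe_range, Set.mem_Iio, Finset.mem_range] at hx hy
    simp only [Finset.disjoint_left, Finset.mem_image]
    rintro c ⟨a, ha, rfl⟩ ⟨b, hb, h⟩
    simp only [Prod.mk.injEq] at h
    -- columns: colOff x + a.1 = colOff y + b.1, with a.1 < len x, b.1 < len y
    have hax := col_lt_of_mem hx (mem_ribbonFinset.mp ha)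
    have hby := col_lt_of_mem hy (mem_ribbonFinset.mp hb)
    have hcol : colOff L y + b.1 = colOff L x + a.1 := h.1
    rcases Nat.lt_or_ge x y with hlt | hge
    · have := colOff_mono L (show x + 1 ≤ y from hlt)
      omega
    · rcases Nat.lt_or_ge y x with hlt' | hge'
      · have := colOff_mono L (show y + 1 ≤ x from hlt')
        omega
      · exact hxy (le_antisymm hge' hge)

-- the sorted list of cells, and the reading tableau
noncomputable def cellList (L : List (List ℕ)) : List (ℕ × ℕ) := (gribbonFinset L).sort rr

noncomputable def readP (L : List (List ℕ)) : ℕ → ℕ × ℕ := fun e =>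
  if 1 ≤ e ∧ e ≤ srtSize L then (cellList L).getD (e - 1) (0, 0) else (0, 0)

lemma cellList_length (L : List (List ℕ)) : (cellList L).length = srtSize L := by
  rw [cellList, Finset.length_sort, card_gribbonFinset]

lemma readP_eq_get {L : List (List ℕ)} {e : ℕ} (he : e ∈ Set.Icc 1 (srtSize L)) :
    readP L e = (cellList L).get ⟨e - 1, by rw [cellList_length]; obtain ⟨h1, h2⟩ := he; omega⟩ := by
  obtain ⟨h1, h2⟩ := he
  rw [readP, if_pos ⟨h1, h2⟩, List.getD_eq_getElem (l := cellList L) (hn := by rw [cellList_length]; omega), List.get_eq_getElem]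

lemma readP_strictMono {L : List (List ℕ)} {a b : ℕ} (ha : a ∈ Set.Icc 1 (srtSize L))
    (hb : b ∈ Set.Icc 1 (srtSize L)) (hab : a < b) : rlt (readP L a) (readP L b) := by
  rw [readP_eq_get ha, readP_eq_get hb]
  obtain ⟨ha1, ha2⟩ := ha
  obtain ⟨hb1, hb2⟩ := hb
  have hidx : (⟨a - 1, by rw [cellList_length]; omega⟩ : Fin (cellList L).length) <
      ⟨b - 1, by rw [cellList_length]; omega⟩ := by
    simp only [Fin.mk_lt_mk]; omega
  refine rlt_iff.mpr ⟨(Finset.pairwise_sort (s := gribbonFinset L) (r := rr)).rel_get_of_lt hidx, ?_⟩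
  intro h
  have := (List.nodup_iff_injective_get.mp (Finset.sort_nodup (s := gribbonFinset L) (r := rr))) h
  replace this := Fin.mk.inj this
  omega

lemma readP_isSRT (L : List (List ℕ)) : IsSRT L (readP L) := by
  refine ⟨⟨?_, ?_, ?_⟩, ?_, ?_, ?_⟩
  · -- MapsTo
    intro e he
    rw [readP_eq_get he]
    rw [← mem_gribbonFinset, ← Finset.mem_sort rr]
    exact List.get_mem ..
  · -- InjOn
    intro a ha b hb hab
    rw [readP_eq_get ha, readP_eq_get hb] at hab
    have := (List.nodup_iff_injective_get.mp (Finset.sort_nodup (s := gribbonFinset L) (r := rr))) hab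
    replace this := Fin.mk.inj this
    obtain ⟨ha1, _⟩ := ha; obtain ⟨hb1, _⟩ := hb
    omega
  · -- SurjOn
    intro c hc
    rw [← mem_gribbonFinset, ← Finset.mem_sort rr (s := gribbonFinset L)] at hc
    obtain ⟨i, hi⟩ := List.mem_iff_get.mp hc
    have hilt : (i : ℕ) < srtSize L := by rw [← cellList_length]; exact i.2
    refine ⟨(i : ℕ) + 1, ⟨by omega, by omega⟩, ?_⟩
    rw [readP_eq_get ⟨by omega, by omega⟩]
    simp only [Nat.add_sub_cancel]
    rw [← hi]
    congr
  · -- rows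
    intro a ha b hb hh hc
    rcases Nat.lt_trichotomy a b with h | h | h
    · exact h
    · subst h; omega
    · have := readP_strictMono hb ha h
      rcases this with h' | ⟨h1', h2'⟩ <;> omega
  · -- columns
    intro a ha b hb hh hc
    rcases Nat.lt_trichotomy a b with h | h | h
    · exact h
    · subst h; omega
    · have := readP_strictMono hb ha h
      rcases this with h' | ⟨h1', h2'⟩ <;> omega
  · intro e he
    rw [readP, if_neg (by simpa [Set.mem_Icc] using he)]

noncomputable def readT (L : List (List ℕ)) : {p : ℕ → ℕ × ℕ // IsSRT L p} :=
  ⟨readP L, readP_isSRT L⟩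

lemma readT_sink (L : List (List ℕ)) : IsSinkSRT L (readT L) := by
  intro i h1 h2
  have := readP_strictMono (L := L) ⟨h1, by omega⟩ ⟨by omega, h2⟩ (by omega)
  simp only [rlt] at this
  simp only [readT]
  omega

-- sink implies row-reading
lemma sink_heights_mono {L : List (List ℕ)} {T : {p : ℕ → ℕ × ℕ // IsSRT L p}}
    (hT : IsSinkSRT L T) {a b : ℕ} (ha : 1 ≤ a) (hab : a ≤ b) :
    b ≤ srtSize L → (T.1 b).2 ≤ (T.1 a).2 := by
  induction b, hab using Nat.le_induction with
  | base => exact fun _ => le_refl _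
  | succ n hn ih =>
    intro hb
    have h1 : ¬ (T.1 n).2 < (T.1 (n + 1)).2 := hT n (by omega) (by omega)
    have h2 := ih (by omega)
    omega

lemma sink_rowReading {L : List (List ℕ)} (T : {p : ℕ → ℕ × ℕ // IsSRT L p})
    (hT : IsSinkSRT L T) : IsRowReadingSRT L T := by
  intro a ha b hb h
  rcases h with h | ⟨h1, h2⟩
  · by_contra hc
    push_neg at hc
    have := sink_heights_mono hT hb.1 hc ha.2
    omega
  · exact T.2.2.1 a ha b hb h1 h2

lemma rowReading_strictMono {L : List (List ℕ)} {T : {p : ℕ → ℕ × ℕ // IsSRT L p}}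
    (hT : IsRowReadingSRT L T) {a b : ℕ} (ha : a ∈ Set.Icc 1 (srtSize L))
    (hb : b ∈ Set.Icc 1 (srtSize L)) (hab : a < b) : rlt (T.1 a) (T.1 b) := by
  rcases rlt_trichotomy (T.1 a) (T.1 b) with h | h | h
  · exact h
  · exact absurd (T.2.1.2.1 ha hb h) (by omega)
  · exact absurd (hT b hb a ha (by simp only [rlt] at h; tauto)) (by omega)

-- uniqueness of the reading enumeration
lemma enum_unique {S : Set (ℕ × ℕ)} {n : ℕ} {p q : ℕ → ℕ × ℕ}
    (hp : Set.BijOn p (Set.Icc 1 n) S) (hq : Set.BijOn q (Set.Icc 1 n) S)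
    (hpm : ∀ a ∈ Set.Icc 1 n, ∀ b ∈ Set.Icc 1 n, a < b → rlt (p a) (p b))
    (hqm : ∀ a ∈ Set.Icc 1 n, ∀ b ∈ Set.Icc 1 n, a < b → rlt (q a) (q b)) :
    ∀ e ∈ Set.Icc 1 n, p e = q e := by
  intro e
  induction e using Nat.strong_induction_on with
  | _ e ih =>
    intro he
    rcases rlt_trichotomy (p e) (q e) with h | h | h
    · obtain ⟨e'', he'', hqe⟩ := hq.2.2 (hp.1 he)
      rcases Nat.lt_trichotomy e'' e with hlt | heq | hgt
      · have h2 : p e'' = p e := (ih e'' hlt he'').trans hqe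
        exact absurd (hp.2.1 he'' he h2) (by omega)
      · rw [heq] at hqe
        rw [← hqe] at h
        exact absurd h (rlt_asymm h)
      · have h2 := hqm e he e'' he'' hgt
        rw [hqe] at h2
        exact absurd h2 (rlt_asymm h)
    · exact h
    · obtain ⟨e'', he'', hpe⟩ := hp.2.2 (hq.1 he)
      rcases Nat.lt_trichotomy e'' e with hlt | heq | hgt
      · have h2 : q e'' = q e := (ih e'' hlt he'').symm.trans hpe
        exact absurd (hq.2.1 he'' he h2) (by omega)
      · rw [heq] at hpe
        rw [← hpe] at h
        exact absurd h (rlt_asymm h)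
      · have h2 := hpm e he e'' he'' hgt
        rw [hpe] at h2
        exact absurd h2 (rlt_asymm h)


/-- there is exactly one standard ribbon tableau `T` of shape `𝛂`
with `π_i · T ∈ {0, T}` for all `i ∈ {1,…,n-1}` (the sink tableau `T^←_𝛂`), and
it is obtained by filling the diagram with `1,…,n` left to right in each row,
rows taken top to bottom. -/
theorem stmt19 (L : List (List ℕ)) (hL : ∀ l ∈ L, l ≠ [] ∧ ∀ x ∈ l, 0 < x) :
    (∃! T : {p : ℕ → ℕ × ℕ // IsSRT L p}, IsSinkSRT L T) ∧
    (∀ T : {p : ℕ → ℕ × ℕ // IsSRT L p}, IsSinkSRT L T → IsRowReadingSRT L T) := by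
  refine ⟨⟨readT L, readT_sink L, fun T hT => ?_⟩, fun T hT => sink_rowReading T hT⟩
  have hrr := sink_rowReading T hT
  have heq := enum_unique T.2.1 (readT L).2.1
    (fun a ha b hb hab => rowReading_strictMono hrr ha hb hab)
    (fun a ha b hb hab => readP_strictMono ha hb hab)
  apply Subtype.ext
  funext e
  by_cases he : e ∈ Set.Icc 1 (srtSize L)
  · exact heq e he
  · rw [T.2.2.2.2 e he, (readT L).2.2.2.2 e he]
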